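/- Fix a prime p. Let A be a commutative ring, R a p-torsion-free commutative A-algebra with a Frobenius lift φ and associated δ-operator δ, extended to R[1/p], which is naturally an A-algebra. Let 𝔞 ⊆ R be an ideal with p ∈ 𝔞, let D⁰ be the R-subalgebra of R[1/p] generated by { δ^j(y/p) : y ∈ 𝔞, j ≥ 0 }, let d : R[1/p] → Ω_{R[1/p]/A} be the universal derivation into the module of Kähler differentials of R[1/p] over A, and let M be the D⁰-submodule of Ω_{R[1/p]/A} generated by { d(ι(r)) : r ∈ R }, where ι : R → R[1/p] is the canonical map. Then for every x ∈ 𝔞 and all integers i, j ≥ 0 there exists ω ∈ M such that p·d( φ^i( δ^j( x/p ) ) ) = p^i · ω. In particular (taking i = 0), p·d( δ^j(x/p) ) ∈ M for all j ≥ 0 and x ∈ 𝔞. -/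

import Mathlib

theorem stmt15_aux (p : ℕ) (hp : p.Prime) {A R S : Type*} [CommRing A] [CommRing R] [CommRing S]
    [Algebra R S] [Algebra A S]
    (π : S) (hπ : algebraMap R S (p : R) * π = 1)
    (φ : R →+* R) (δR : R → R) (hδR : ∀ a : R, (p : R) * δR a = φ a - a ^ p)
    (ψ : S →+* S) (hψ : ∀ a : R, ψ (algebraMap R S a) = algebraMap R S (φ a))
    (δ : S → S) (hδ : ∀ y : S, (p : S) * δ y = ψ y - y ^ p)
    (𝔞 : Ideal R) (h𝔞 : (p : R) ∈ 𝔞) :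
    ∀ j : ℕ, ∀ y ∈ 𝔞, ∀ i : ℕ,
      ∃ ω ∈ AddSubmonoid.closure {η : KaehlerDifferential A S |
          ∃ c ∈ Algebra.adjoin R {z : S | ∃ a ∈ 𝔞, ∃ j : ℕ, z = δ^[j] (algebraMap R S a * π)},
          ∃ r : R, η = c • (KaehlerDifferential.D A S) (algebraMap R S r)},
        (p : S) • (KaehlerDifferential.D A S) ((⇑ψ)^[i] (δ^[j] (algebraMap R S y * π))) =
          (p : S) ^ i • ω := by
  classical
  set ι := algebraMap R S with hι
  set d := KaehlerDifferential.D A S with hd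
  set D0 : Subalgebra R S :=
    Algebra.adjoin R {z : S | ∃ a ∈ 𝔞, ∃ j : ℕ, z = δ^[j] (ι a * π)} with hD0def
  set M : AddSubmonoid (KaehlerDifferential A S) :=
    AddSubmonoid.closure {η : KaehlerDifferential A S |
      ∃ c ∈ D0, ∃ r : R, η = c • d (ι r)} with hMdef
  -- basic facts about p and π
  have hp1 : (p : S) * π = 1 := by rw [← map_natCast ι p]; exact hπ
  have hπ1 : π * (p : S) = 1 := by rw [mul_comm]; exact hp1
  have hcan : ∀ a b : S, (p : S) * a = (p : S) * b → a = b := by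
    intro a b h
    calc a = (π * (p : S)) * a := by rw [hπ1, one_mul]
    _ = π * ((p : S) * a) := by ring
    _ = π * ((p : S) * b) := by rw [h]
    _ = (π * (p : S)) * b := by ring
    _ = b := by rw [hπ1, one_mul]
  have hπpow : ∀ i : ℕ, π * (p : S) ^ (i + 1) = (p : S) ^ i := by
    intro i
    rw [pow_succ', ← mul_assoc, hπ1, one_mul]
  have hΩcan : ∀ (x ωx : KaehlerDifferential A S) (i : ℕ),
      (p : S) • x = (p : S) ^ (i + 1) • ωx → x = (p : S) ^ i • ωx := by
    intro x ωx i h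
    calc x = (π * (p : S)) • x := by rw [hπ1, one_smul]
    _ = π • ((p : S) • x) := by rw [mul_smul]
    _ = π • ((p : S) ^ (i + 1) • ωx) := by rw [h]
    _ = (π * (p : S) ^ (i + 1)) • ωx := by rw [mul_smul]
    _ = (p : S) ^ i • ωx := by rw [hπpow]
  -- basic facts about φ, ψ, δ
  have hφa : ∀ a : R, φ a = a ^ p + (p : R) * δR a := by
    intro a; rw [hδR a]; ring
  have hψ' : ∀ x : S, ψ x = x ^ p + (p : S) * δ x := by
    intro x; rw [hδ x]; ring
  have hψp : ψ (p : S) = (p : S) := map_natCast ψ p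
  have hψπ : ψ π = π := by
    refine hcan _ _ ?_
    have h1 : ψ ((p : S) * π) = 1 := by rw [hp1, map_one]
    rw [map_mul, hψp] at h1
    rw [h1, hp1]
  have hδψ : ∀ x : S, δ (ψ x) = ψ (δ x) := by
    intro x
    refine hcan _ _ ?_
    have h2 : (p : S) * ψ (δ x) = ψ (ψ x) - (ψ x) ^ p := by
      rw [← hψp, ← map_mul, hδ, map_sub, map_pow]
    rw [hδ (ψ x), h2]
  have hδψi : ∀ (i : ℕ) (x : S), δ ((⇑ψ)^[i] x) = (⇑ψ)^[i] (δ x) := by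
    intro i
    induction i with
    | zero => intro x; simp
    | succ i IH =>
      intro x
      rw [Function.iterate_succ_apply, IH (ψ x), hδψ, ← Function.iterate_succ_apply]
  have hψit : ∀ (i : ℕ) (a b : S),
      (⇑ψ)^[i] (a ^ p + (p : S) * b) = ((⇑ψ)^[i] a) ^ p + (p : S) * (⇑ψ)^[i] b := by
    intro i
    induction i with
    | zero => intro a b; simp
    | succ i IH =>
      intro a b
      rw [Function.iterate_succ_apply, map_add, map_pow, map_mul, hψp, IH (ψ a) (ψ b),
        ← Function.iterate_succ_apply, ← Function.iterate_succ_apply]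
  have hφit : ∀ (i : ℕ) (a b : R),
      (⇑φ)^[i] (a ^ p + (p : R) * b) = ((⇑φ)^[i] a) ^ p + (p : R) * (⇑φ)^[i] b := by
    intro i
    induction i with
    | zero => intro a b; simp
    | succ i IH =>
      intro a b
      rw [Function.iterate_succ_apply, map_add, map_pow, map_mul, map_natCast, IH (φ a) (φ b),
        ← Function.iterate_succ_apply, ← Function.iterate_succ_apply]
  have hφip : ∀ i : ℕ, (⇑φ)^[i] ((p : ℕ) : R) = ((p : ℕ) : R) := by
    intro i
    induction i with
    | zero => simp
    | succ i IH => rw [Function.iterate_succ_apply', IH, map_natCast]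
  have hφ𝔞 : ∀ (i : ℕ), ∀ a ∈ 𝔞, (⇑φ)^[i] a ∈ 𝔞 := by
    intro i
    induction i with
    | zero => intro a ha; simpa using ha
    | succ i IH =>
      intro a ha
      rw [Function.iterate_succ_apply', hφa]
      exact add_mem (Ideal.pow_mem_of_mem 𝔞 (IH a ha) p hp.pos)
        (Ideal.mul_mem_right _ 𝔞 h𝔞)
  have hψu : ∀ (i : ℕ) (y : R), (⇑ψ)^[i] (ι y * π) = ι ((⇑φ)^[i] y) * π := by
    intro i
    induction i with
    | zero => intro y; simp
    | succ i IH =>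
      intro y
      rw [Function.iterate_succ_apply, map_mul, hψ, hψπ, IH (φ y),
        ← Function.iterate_succ_apply]
  -- membership facts for D0
  have hD0ι : ∀ r : R, ι r ∈ D0 := fun r => Subalgebra.algebraMap_mem D0 r
  have hD0p : ((p : ℕ) : S) ∈ D0 := by
    rw [← map_natCast ι p]; exact hD0ι _
  have hgen : ∀ a ∈ 𝔞, ∀ j : ℕ, δ^[j] (ι a * π) ∈ D0 := by
    intro a ha j
    exact Algebra.subset_adjoin ⟨a, ha, j, rfl⟩
  have hψD0 : ∀ (i j : ℕ), ∀ a ∈ 𝔞, (⇑ψ)^[i] (δ^[j] (ι a * π)) ∈ D0 := by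
    intro i
    induction i with
    | zero => intro j a ha; simpa using hgen a ha j
    | succ i IH =>
      intro j a ha
      rw [Function.iterate_succ_apply, hψ' (δ^[j] (ι a * π)),
        show δ (δ^[j] (ι a * π)) = δ^[j + 1] (ι a * π) from
          (Function.iterate_succ_apply' δ j _).symm,
        hψit]
      exact add_mem (pow_mem (IH j a ha) p) (mul_mem hD0p (IH (j + 1) a ha))
  -- membership facts for M
  have hMd : ∀ (c : S), c ∈ D0 → ∀ r : R, c • d (ι r) ∈ M := by
    intro c hc r
    exact AddSubmonoid.subset_closure ⟨c, hc, r, rfl⟩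
  have hMd1 : ∀ r : R, d (ι r) ∈ M := by
    intro r
    simpa using hMd 1 (one_mem D0) r
  have hMsmul : ∀ (c : S), c ∈ D0 → ∀ m ∈ M, c • m ∈ M := by
    intro c hc m hm
    induction hm using AddSubmonoid.closure_induction with
    | mem x hx =>
      obtain ⟨c', hc', r, rfl⟩ := hx
      rw [smul_smul]
      exact AddSubmonoid.subset_closure ⟨c * c', mul_mem hc hc', r, rfl⟩
    | zero => simpa using zero_mem M
    | add x y hx hy ihx ihy =>
      rw [smul_add]
      exact add_mem ihx ihy
  have hMneg : ∀ m ∈ M, -m ∈ M := by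
    intro m hm
    induction hm using AddSubmonoid.closure_induction with
    | mem x hx =>
      obtain ⟨c', hc', r, rfl⟩ := hx
      rw [← neg_smul]
      exact AddSubmonoid.subset_closure ⟨-c', neg_mem hc', r, rfl⟩
    | zero => simpa using zero_mem M
    | add x y hx hy ihx ihy =>
      rw [neg_add]
      exact add_mem ihx ihy
  have hMsub : ∀ a ∈ M, ∀ b ∈ M, a - b ∈ M := by
    intro a ha b hb
    rw [sub_eq_add_neg]
    exact add_mem ha (hMneg b hb)
  -- the derivation kills p
  have hdp : d ((p : ℕ) : S) = 0 := Derivation.map_natCast d p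
  -- Lemma L : d (ι (φ^[i] s)) = p^i • ω with ω ∈ M
  have hL : ∀ (i : ℕ) (s : R), ∃ ω ∈ M, d (ι ((⇑φ)^[i] s)) = (p : S) ^ i • ω := by
    intro i
    induction i with
    | zero =>
      intro s
      exact ⟨d (ι s), hMd1 s, by simp⟩
    | succ i IH =>
      intro s
      obtain ⟨ω₁, hω₁, e₁⟩ := IH s
      obtain ⟨ω₂, hω₂, e₂⟩ := IH (δR s)
      refine ⟨(ι ((⇑φ)^[i] s)) ^ (p - 1) • ω₁ + ω₂,
        add_mem (hMsmul _ (pow_mem (hD0ι _) _) _ hω₁) hω₂, ?_⟩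
      have h1 : (⇑φ)^[i + 1] s = ((⇑φ)^[i] s) ^ p + (p : R) * (⇑φ)^[i] (δR s) := by
        rw [Function.iterate_succ_apply, hφa s, hφit]
      rw [h1, map_add, map_pow, map_mul, map_natCast, map_add, Derivation.leibniz_pow,
        Derivation.leibniz, hdp, smul_zero, add_zero, e₁, e₂]
      rw [smul_comm ((ι ((⇑φ)^[i] s)) ^ (p - 1)) ((p : S) ^ i) ω₁]
      rw [← Nat.cast_smul_eq_nsmul S p]
      rw [smul_smul, smul_smul, smul_smul, smul_add, smul_smul]
      ring_nf
  -- base case j = 0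
  have hbase : ∀ y ∈ 𝔞, ∀ i : ℕ,
      ∃ ω ∈ M, (p : S) • d ((⇑ψ)^[i] (ι y * π)) = (p : S) ^ i • ω := by
    intro y hy i
    obtain ⟨ω₁, hω₁, e₁⟩ := hL i y
    obtain ⟨ωp, hωp, ep⟩ := hL i ((p : ℕ) : R)
    rw [hφip i] at ep
    have hgmem : ι ((⇑φ)^[i] y) * π ∈ D0 := by
      simpa using hgen _ (hφ𝔞 i y hy) 0
    refine ⟨ω₁ - (ι ((⇑φ)^[i] y) * π) • ωp,
      hMsub _ hω₁ _ (hMsmul _ hgmem _ hωp), ?_⟩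
    rw [hψu i y]
    have hdπ : (p : S) • d π = -(π • d (ι ((p : ℕ) : R))) := by
      have h0 : d (ι ((p : ℕ) : R) * π) = 0 := by rw [hπ]; exact Derivation.map_one_eq_zero d
      rw [Derivation.leibniz] at h0
      have h0' : ι ((p : ℕ) : R) • d π = -(π • d (ι ((p : ℕ) : R))) := by
        rw [eq_neg_iff_add_eq_zero]; exact h0
      rw [← h0', map_natCast ι p]
    calc (p : S) • d (ι ((⇑φ)^[i] y) * π)
        = (p : S) • (ι ((⇑φ)^[i] y) • d π + π • d (ι ((⇑φ)^[i] y))) := by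
          rw [Derivation.leibniz]
    _ = ι ((⇑φ)^[i] y) • ((p : S) • d π) + ((p : S) * π) • d (ι ((⇑φ)^[i] y)) := by
          rw [smul_add, smul_comm ((p : S)) (ι ((⇑φ)^[i] y)) (d π), mul_smul]
    _ = ι ((⇑φ)^[i] y) • (-(π • d (ι ((p : ℕ) : R)))) + d (ι ((⇑φ)^[i] y)) := by
          rw [hdπ, hp1, one_smul]
    _ = d (ι ((⇑φ)^[i] y)) - (ι ((⇑φ)^[i] y) * π) • d (ι ((p : ℕ) : R)) := by
          rw [smul_neg, smul_smul]; abel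
    _ = (p : S) ^ i • ω₁ - (ι ((⇑φ)^[i] y) * π) • ((p : S) ^ i • ωp) := by
          rw [e₁, ep]
    _ = (p : S) ^ i • (ω₁ - (ι ((⇑φ)^[i] y) * π) • ωp) := by
          rw [smul_sub, smul_comm ((p : S) ^ i) (ι ((⇑φ)^[i] y) * π) ωp]
  -- main induction on j
  have main : ∀ j : ℕ, ∀ y ∈ 𝔞, ∀ i : ℕ,
      ∃ ω ∈ M, (p : S) • d ((⇑ψ)^[i] (δ^[j] (ι y * π))) = (p : S) ^ i • ω := by
    intro j
    induction j with
    | zero =>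
      intro y hy i
      simpa using hbase y hy i
    | succ j IH =>
      intro y hy i
      obtain ⟨ω₁, hω₁, e₁⟩ := IH y hy (i + 1)
      obtain ⟨ω₂, hω₂, e₂⟩ := IH y hy i
      set w := (⇑ψ)^[i] (δ^[j] (ι y * π)) with hwdef
      have hw : w ∈ D0 := hψD0 i j y hy
      refine ⟨ω₁ - w ^ (p - 1) • ω₂,
        hMsub _ hω₁ _ (hMsmul _ (pow_mem hw _) _ hω₂), ?_⟩
      have h1 : (⇑ψ)^[i] (δ^[j + 1] (ι y * π)) = δ w := by
        rw [Function.iterate_succ_apply' δ j _, hδψi]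
      rw [h1]
      have h3 : d ((p : S) * δ w) = (p : S) • d (δ w) := by
        rw [Derivation.leibniz, hdp, smul_zero, add_zero]
      have h4 : d (ψ w) = (p : S) ^ i • ω₁ := by
        refine hΩcan _ _ i ?_
        rw [hwdef, ← Function.iterate_succ_apply' ψ i]
        exact e₁
      have h5 : d (w ^ p) = w ^ (p - 1) • ((p : S) ^ i • ω₂) := by
        rw [Derivation.leibniz_pow, ← Nat.cast_smul_eq_nsmul S p, smul_comm ((p : S)) (w ^ (p - 1)),
          e₂]
      have h2 : (p : S) • d (δ w) = d (ψ w) - d (w ^ p) := by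
        rw [← h3, hδ w, map_sub]
      rw [h2, h4, h5, smul_sub, smul_comm ((p : S) ^ i) (w ^ (p - 1)) ω₂]
  exact main


/-- The subring `D⁰`: the `R`-subalgebra of `R[1/p]` generated by
`{ δ^j(y/p) : y ∈ 𝔞, j ≥ 0 }`. -/
noncomputable def Dzero (p : ℕ) {R : Type*} [CommRing R]
    (δ : Localization.Away (p : R) → Localization.Away (p : R)) (𝔞 : Ideal R) :
    Subalgebra R (Localization.Away (p : R)) :=
  Algebra.adjoin R {y : Localization.Away (p : R) | ∃ a ∈ 𝔞, ∃ j : ℕ,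
    y = δ^[j] (algebraMap R (Localization.Away (p : R)) a *
      IsLocalization.Away.invSelf (S := Localization.Away (p : R)) (p : R))}

/-- The `D⁰`-submodule `M` of `Ω_{R[1/p]/A}` generated by `{ d(ι r) : r ∈ R }`, realized
(as a set) as the additive closure of the `D⁰`-multiples of the `d(ι r)`. -/
noncomputable def Msub (p : ℕ) {A R : Type*} [CommRing A] [CommRing R] [Algebra A R]
    [Algebra A (Localization.Away (p : R))] [IsScalarTower A R (Localization.Away (p : R))]
    (δ : Localization.Away (p : R) → Localization.Away (p : R)) (𝔞 : Ideal R) :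
    AddSubmonoid (KaehlerDifferential A (Localization.Away (p : R))) :=
  AddSubmonoid.closure {η : KaehlerDifferential A (Localization.Away (p : R)) |
    ∃ c ∈ Dzero p δ 𝔞, ∃ r : R,
      η = c • (KaehlerDifferential.D A (Localization.Away (p : R)))
        (algebraMap R (Localization.Away (p : R)) r)}

/-- Let `R` be a `p`-torsion-free `A`-algebra with a Frobenius lift `φ`
(with `δ`-operator `δR`), extended to `R[1/p]` as `ψ` with extended `δ`-operator `δ`. Let
`𝔞 ⊆ R` be an ideal with `p ∈ 𝔞`, `D⁰` the `R`-subalgebra of `R[1/p]` generated by the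
`δ^j(y/p)` for `y ∈ 𝔞`, `d` the universal derivation of `R[1/p]` over `A`, and `M` the
`D⁰`-submodule of `Ω_{R[1/p]/A}` generated by the `d(ι r)`, `r ∈ R`. Then for every
`x ∈ 𝔞` and all `i, j ≥ 0` there is `ω ∈ M` with `p·d(φ^i(δ^j(x/p))) = p^i·ω`; in
particular `p·d(δ^j(x/p)) ∈ M` for all `j ≥ 0` and `x ∈ 𝔞`. -/
theorem stmt15 (p : ℕ) (hp : p.Prime) {A R : Type*} [CommRing A] [CommRing R] [Algebra A R]
    [Algebra A (Localization.Away (p : R))] [IsScalarTower A R (Localization.Away (p : R))]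
    (hR : Function.Injective fun a : R => (p : R) * a)
    (φ : R →+* R) (δR : R → R)
    (hδR : ∀ a : R, (p : R) * δR a = φ a - a ^ p)
    (ψ : Localization.Away (p : R) →+* Localization.Away (p : R))
    (hψ : ∀ a : R, ψ (algebraMap R (Localization.Away (p : R)) a)
        = algebraMap R (Localization.Away (p : R)) (φ a))
    (δ : Localization.Away (p : R) → Localization.Away (p : R))
    (hδ : ∀ y : Localization.Away (p : R), (p : Localization.Away (p : R)) * δ y = ψ y - y ^ p)
    (𝔞 : Ideal R) (h𝔞 : (p : R) ∈ 𝔞) :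
    (∀ x ∈ 𝔞, ∀ i j : ℕ, ∃ ω ∈ Msub p δ 𝔞,
      (p : Localization.Away (p : R)) •
          (KaehlerDifferential.D A (Localization.Away (p : R)))
            ((⇑ψ)^[i] (δ^[j] (algebraMap R (Localization.Away (p : R)) x *
              IsLocalization.Away.invSelf (S := Localization.Away (p : R)) (p : R)))) =
        (p : Localization.Away (p : R)) ^ i • ω) ∧
    (∀ x ∈ 𝔞, ∀ j : ℕ,
      (p : Localization.Away (p : R)) •
          (KaehlerDifferential.D A (Localization.Away (p : R)))
            (δ^[j] (algebraMap R (Localization.Away (p : R)) x *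
              IsLocalization.Away.invSelf (S := Localization.Away (p : R)) (p : R))) ∈
        Msub p δ 𝔞) := by
  have h := @stmt15_aux p hp A R (Localization.Away (p : R)) _ _ _
    _ ‹Algebra A (Localization.Away ((p : ℕ) : R))›
    (IsLocalization.Away.invSelf (S := Localization.Away (p : R)) (p : R))
    (IsLocalization.Away.mul_invSelf (S := Localization.Away (p : R)) ((p : ℕ) : R))
    φ δR hδR ψ hψ δ hδ 𝔞 h𝔞
  constructor
  · intro x hx i j
    exact h j x hx i
  · intro x hx j
    obtain ⟨ω, hω, e⟩ := h j x hx 0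
    simp only [Function.iterate_zero_apply, pow_zero, one_smul] at e
    rw [e]
    exact hω
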